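/- arXiv:1011.0558 — 5 statements merged into one kernel-verified Lean document; each statement's English description precedes it below -/
import Mathlib

section
/- The reduced standard presentation of a category C is locally confluent: its critical branchings are exactly the pairs (μ_{u,v} w̄, ū μ_{v,w}) for triples (u,v,w) of composable non-identity morphisms of C, and each such branching is confluent; hence, being also terminating, the presentation is convergent and presents C. -/
open CategoryTheory

/-- A generator of the reduced standard presentation of a category `C`. -/
def Gen (C : Type*) [Category C] : Type _ := Σ x y : C, x ⟶ y

/-- A generator is a non-identity morphism. -/
def NonId {C : Type*} [Category C] (g : Gen C) : Prop :=
  ∀ x : C, g ≠ ⟨x, x, 𝟙 x⟩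

/-- A rewriting step of the reduced standard presentation of `C`. -/
def RStep {C : Type*} [Category C] (a b : List (Gen C)) : Prop :=
  ∃ (pre post : List (Gen C)) (x y z : C) (u : x ⟶ y) (v : y ⟶ z),
    NonId ⟨x, y, u⟩ ∧ NonId ⟨y, z, v⟩ ∧
    a = pre ++ [⟨x, y, u⟩, ⟨y, z, v⟩] ++ post ∧
    ((NonId ⟨x, z, u ≫ v⟩ ∧ b = pre ++ [⟨x, z, u ≫ v⟩] ++ post) ∨
     (¬ NonId ⟨x, z, u ≫ v⟩ ∧ b = pre ++ post))

/-- A word of generators evaluates to the morphism `f : x ⟶ y` of `C`. -/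
def Evals {C : Type*} [Category C] : List (Gen C) → ∀ (x y : C), (x ⟶ y) → Prop
  | [] => fun x y f => ∃ h : x = y, f = eqToHom h
  | g :: l => fun x y f =>
      ∃ (z : C) (u : x ⟶ z) (k : z ⟶ y), g = ⟨x, z, u⟩ ∧ Evals l z y k ∧ f = u ≫ k

section Aux

variable {C : Type*} [Category C]

def idg (x : C) : Gen C := ⟨x, x, 𝟙 x⟩

lemma notNonId_iff (g : Gen C) : ¬ NonId g ↔ ∃ x : C, g = idg x := by
  simp only [NonId, idg, not_forall, not_not]

lemma gensplit {x y x' y' : C} {u : x ⟶ y} {u' : x' ⟶ y'}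
    (h : (⟨x,y,u⟩ : Gen C) = ⟨x',y',u'⟩) : ∃ (_ : x = x') (_ : y = y'), HEq u u' := by
  obtain ⟨e1, h2⟩ := Sigma.ext_iff.mp h
  subst e1
  obtain ⟨e2, h3⟩ := Sigma.ext_iff.mp (eq_of_heq h2)
  subst e2
  exact ⟨rfl, rfl, h3⟩

lemma genext {x y : C} {u u' : x ⟶ y} (h : (⟨x,y,u⟩ : Gen C) = ⟨x,y,u'⟩) : u = u' := by
  obtain ⟨-, -, h3⟩ := gensplit h; exact eq_of_heq h3
attribute [local instance] Classical.propDecidable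

def NoRed (g h : Gen C) : Prop := ¬ (NonId g ∧ NonId h ∧ g.2.1 = h.1)

def gcomp (g h : Gen C) (e : g.2.1 = h.1) : Gen C := ⟨g.1, h.2.1, g.2.2 ≫ eqToHom e ≫ h.2.2⟩

noncomputable def opt (g : Gen C) : List (Gen C) := if NonId g then [g] else []

noncomputable def ins (g : Gen C) : List (Gen C) → List (Gen C)
  | [] => [g]
  | h :: t =>
    if hc : NonId g ∧ NonId h ∧ g.2.1 = h.1 then opt (gcomp g h hc.2.2) ++ t
    else g :: h :: t

noncomputable def nf : List (Gen C) → List (Gen C) := List.foldr ins []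

lemma ins_nil (g : Gen C) : ins g [] = [g] := rfl

lemma ins_nored {g h : Gen C} (hn : NoRed g h) (t : List (Gen C)) :
    ins g (h :: t) = g :: h :: t := by
  rw [ins, dif_neg hn]

lemma ins_red {g h : Gen C} (hg : NonId g) (hh : NonId h) (e : g.2.1 = h.1)
    (t : List (Gen C)) :
    ins g (h :: t) = opt (gcomp g h e) ++ t := by
  rw [ins, dif_pos ⟨hg, hh, e⟩]

lemma rstep_cons {a b : List (Gen C)} (g : Gen C) (h : RStep a b) : RStep (g::a) (g::b) := by
  obtain ⟨pre, post, x, y, z, u, v, hu, hv, ha, hb⟩ := h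
  refine ⟨g :: pre, post, x, y, z, u, v, hu, hv, by simp [ha], ?_⟩
  rcases hb with ⟨h1, h2⟩ | ⟨h1, h2⟩
  · exact Or.inl ⟨h1, by simp [h2]⟩
  · exact Or.inr ⟨h1, by simp [h2]⟩

lemma rtg_cons {a b : List (Gen C)} (g : Gen C)
    (h : Relation.ReflTransGen (@RStep C _) a b) :
    Relation.ReflTransGen (@RStep C _) (g::a) (g::b) := by
  induction h with
  | refl => exact .refl
  | tail _ hs ih => exact ih.tail (rstep_cons g hs)

lemma rstep_red (x y z : C) (u : x ⟶ y) (v : y ⟶ z)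
    (hu : NonId (⟨x,y,u⟩ : Gen C)) (hv : NonId (⟨y,z,v⟩ : Gen C)) (t : List (Gen C)) :
    RStep (⟨x,y,u⟩ :: ⟨y,z,v⟩ :: t) (opt ⟨x,z,u≫v⟩ ++ t) := by
  refine ⟨[], t, x, y, z, u, v, hu, hv, rfl, ?_⟩
  by_cases hc : NonId (⟨x,z,u≫v⟩ : Gen C)
  · exact Or.inl ⟨hc, by simp [opt, hc]⟩
  · exact Or.inr ⟨hc, by simp [opt, hc]⟩

lemma rtg_ins (g : Gen C) (m : List (Gen C)) :
    Relation.ReflTransGen (@RStep C _) (g :: m) (ins g m) := by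
  cases m with
  | nil => exact .refl
  | cons h t =>
    by_cases hc : NonId g ∧ NonId h ∧ g.2.1 = h.1
    · obtain ⟨hg, hh, e⟩ := hc
      rw [ins_red hg hh e]
      obtain ⟨x, y, u⟩ := g
      obtain ⟨y', z, v⟩ := h
      cases e
      have : gcomp (⟨x,y,u⟩ : Gen C) ⟨y,z,v⟩ rfl = ⟨x,z,u≫v⟩ := by
        simp [gcomp]; rfl
      rw [this]
      exact Relation.ReflTransGen.single (rstep_red x y z u v hg hh t)
    · rw [ins_nored hc]

lemma rtg_nf (l : List (Gen C)) : Relation.ReflTransGen (@RStep C _) l (nf l) := by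
  induction l with
  | nil => exact .refl
  | cons g l ih => exact (rtg_cons g ih).trans (rtg_ins g (nf l))

lemma gcomp_mk (x y z : C) (u : x ⟶ y) (v : y ⟶ z) (e) :
    gcomp (⟨x,y,u⟩ : Gen C) ⟨y,z,v⟩ e = ⟨x,z,u≫v⟩ := by
  simp [gcomp]; rfl

lemma nored_of_target {g g' h : Gen C} (hg' : NonId g') (e : g.2.1 = g'.2.1)
    (hr : NoRed g' h) : NoRed g h := by
  rintro ⟨-, hh, ec⟩
  exact hr ⟨hg', hh, e ▸ ec⟩

lemma ins_eq_cons {g : Gen C} {t : List (Gen C)} (hr : ∀ p ∈ t.head?, NoRed g p) :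
    ins g t = g :: t := by
  cases t with
  | nil => rfl
  | cons h t => exact ins_nored (hr h rfl) t

abbrev NormW (m : List (Gen C)) : Prop := List.Chain' NoRed m

lemma norm_ins (g : Gen C) {m : List (Gen C)} (hm : NormW m) : NormW (ins g m) := by
  cases m with
  | nil => simp [ins_nil, NormW, List.Chain']
  | cons h t =>
    by_cases hc : NonId g ∧ NonId h ∧ g.2.1 = h.1
    · obtain ⟨hg, hh, e⟩ := hc
      rw [ins_red hg hh e, opt]
      split
      · refine List.isChain_cons.mpr ⟨?_, (List.isChain_cons.mp hm).2⟩
        intro p hp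
        exact nored_of_target hh rfl ((List.isChain_cons.mp hm).1 p hp)
      · simpa [List.Chain'] using (List.isChain_cons.mp hm).2
    · rw [ins_nored hc]
      exact List.isChain_cons_cons.mpr ⟨hc, hm⟩

lemma nonid_ins {g : Gen C} {m : List (Gen C)} (hg : NonId g) (hm : ∀ p ∈ m, NonId p) :
    ∀ p ∈ ins g m, NonId p := by
  cases m with
  | nil => simpa [ins_nil] using hg
  | cons h t =>
    by_cases hc : NonId g ∧ NonId h ∧ g.2.1 = h.1
    · obtain ⟨hg', hh, e⟩ := hc
      rw [ins_red hg' hh e, opt]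
      intro p hp
      split at hp
      · rcases List.mem_append.mp hp with hp | hp
        · rw [List.mem_singleton.mp hp]; assumption
        · exact hm p (List.mem_cons_of_mem h hp)
      · exact hm p (List.mem_cons_of_mem h (by simpa using hp))
    · rw [ins_nored hc]
      intro p hp
      rcases List.mem_cons.mp hp with hp | hp
      · exact hp ▸ hg
      · exact hm p hp

lemma norm_nf (l : List (Gen C)) : NormW (nf l) := by
  induction l with
  | nil => simp [nf, NormW, List.Chain']
  | cons g l ih => exact norm_ins g ih

lemma nonid_nf {l : List (Gen C)} (hl : ∀ p ∈ l, NonId p) : ∀ p ∈ nf l, NonId p := by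
  induction l with
  | nil => simp [nf]
  | cons g l ih =>
    exact nonid_ins (hl g List.mem_cons_self) fun p hp =>
      ih (fun q hq => hl q (List.mem_cons_of_mem g hq)) p hp

lemma notNonId_elim {a b : C} {f : a ⟶ b} (hf : ¬ NonId (⟨a,b,f⟩ : Gen C)) :
    ∃ (_ : a = b), HEq f (𝟙 a) := by
  obtain ⟨x₀, hc⟩ := (notNonId_iff _).mp hf
  obtain ⟨e1, e2, hh⟩ := gensplit hc
  subst e1
  subst e2
  exact ⟨rfl, hh⟩

lemma key {g h : Gen C} (hg : NonId g) (hh : NonId h) (e : g.2.1 = h.1)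
    {m : List (Gen C)} (hm : NormW m) :
    ins g (ins h m) = if NonId (gcomp g h e) then ins (gcomp g h e) m else m := by
  obtain ⟨x, y, u⟩ := g
  obtain ⟨y', z, v⟩ := h
  have e' : y = y' := e
  subst e'
  rw [gcomp_mk]
  cases m with
  | nil =>
    erw [ins_nil, ins_red hg hh rfl, gcomp_mk]
    by_cases hcn : NonId (⟨x,z,u≫v⟩ : Gen C)
    · erw [if_pos hcn, ins_nil]; simp [opt, hcn]
    · rw [if_neg hcn]; simp [opt, hcn]
  | cons k t =>
    by_cases hB : NonId k ∧ z = k.1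
    · obtain ⟨hk, e2⟩ := hB
      obtain ⟨z', w, kw⟩ := k
      have e2' : z = z' := e2
      subst e2'
      rw [ins_red hh hk rfl, gcomp_mk]
      by_cases hdn : NonId (⟨y,w,v≫kw⟩ : Gen C)
      · erw [opt.eq_1, if_pos hdn, List.singleton_append, ins_red hg hdn rfl, gcomp_mk]
        by_cases hcn : NonId (⟨x,z,u≫v⟩ : Gen C)
        · rw [if_pos hcn, ins_red hcn hk rfl, gcomp_mk, Category.assoc]
        · rw [if_neg hcn]
          obtain ⟨e3, hheq⟩ := notNonId_elim hcn
          subst e3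
          have hv : u ≫ v = 𝟙 x := eq_of_heq hheq
          have hTk : (⟨x,w,u≫v≫kw⟩ : Gen C) = ⟨x,w,kw⟩ := by
            rw [← Category.assoc, hv, Category.id_comp]
          erw [hTk, opt.eq_1, if_pos hk]
          rfl
      · erw [opt.eq_1, if_neg hdn, List.nil_append]
        obtain ⟨e3, hheq⟩ := notNonId_elim hdn
        subst e3
        have hvk : v ≫ kw = 𝟙 y := eq_of_heq hheq
        have hins : ins (⟨x,y,u⟩ : Gen C) t = ⟨x,y,u⟩ :: t :=
          ins_eq_cons (fun p hp => nored_of_target hk rfl ((List.isChain_cons.mp hm).1 p hp))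
        by_cases hcn : NonId (⟨x,z,u≫v⟩ : Gen C)
        · rw [if_pos hcn, ins_red hcn hk rfl, gcomp_mk]
          have hT : (⟨x,y,(u≫v)≫kw⟩ : Gen C) = ⟨x,y,u⟩ := by
            rw [Category.assoc, hvk, Category.comp_id]
          erw [hT, opt.eq_1, if_pos hg]
          exact hins
        · rw [if_neg hcn]
          obtain ⟨e5, hheq2⟩ := notNonId_elim hcn
          subst e5
          have hv : u ≫ v = 𝟙 x := eq_of_heq hheq2
          have hkw : kw = u := by
            have h2 : (u ≫ v) ≫ kw = u ≫ (v ≫ kw) := Category.assoc u v kw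
            rw [hv, hvk, Category.id_comp, Category.comp_id] at h2
            exact h2
          subst hkw
          simpa using hins
    · have hnored : NoRed (⟨y,z,v⟩ : Gen C) k := fun ⟨_, h2, h3⟩ => hB ⟨h2, h3⟩
      rw [ins_nored hnored, ins_red hg hh rfl, gcomp_mk]
      by_cases hcn : NonId (⟨x,z,u≫v⟩ : Gen C)
      · rw [if_pos hcn,
          ins_nored (nored_of_target (g := (⟨x,z,u≫v⟩ : Gen C)) hh rfl hnored)]
        simp [opt, hcn]; rfl
      · rw [if_neg hcn]; simp [opt, hcn]

lemma nf_append (l₁ l₂ : List (Gen C)) : nf (l₁ ++ l₂) = List.foldr ins (nf l₂) l₁ := by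
  simp [nf, List.foldr_append]

lemma step_nf {a b : List (Gen C)} (h : RStep a b) : nf a = nf b := by
  obtain ⟨pre, post, x, y, z, u, v, hu, hv, ha, hb⟩ := h
  subst ha
  have base := key hu hv (e := rfl) (norm_nf post)
  rw [gcomp_mk] at base
  have e1 : nf (([(⟨x,y,u⟩ : Gen C), ⟨y,z,v⟩] : List (Gen C)) ++ post)
      = ins (⟨x,y,u⟩ : Gen C) (ins (⟨y,z,v⟩ : Gen C) (nf post)) := rfl
  have e2 : nf (([(⟨x,z,u≫v⟩ : Gen C)] : List (Gen C)) ++ post)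
      = ins (⟨x,z,u≫v⟩ : Gen C) (nf post) := rfl
  rcases hb with ⟨h1, h2⟩ | ⟨h1, h2⟩ <;> subst h2
  · rw [if_pos h1] at base
    rw [List.append_assoc, nf_append, e1, base, ← e2, ← nf_append, ← List.append_assoc]
  · rw [if_neg h1] at base
    rw [List.append_assoc, nf_append, e1, base, ← nf_append]

lemma rtg_nf_eq {a b : List (Gen C)} (h : Relation.ReflTransGen (@RStep C _) a b) :
    nf a = nf b := by
  induction h with
  | refl => rfl
  | tail _ hs ih => exact ih.trans (step_nf hs)

lemma eqv_nf_eq {a b : List (Gen C)} (h : Relation.EqvGen (@RStep C _) a b) :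
    nf a = nf b := by
  induction h with
  | rel _ _ hs => exact step_nf hs
  | refl => rfl
  | symm _ _ _ ih => exact ih.symm
  | trans _ _ _ _ _ ih1 ih2 => exact ih1.trans ih2

lemma confl (a b c : List (Gen C))
    (hab : Relation.ReflTransGen (@RStep C _) a b)
    (hac : Relation.ReflTransGen (@RStep C _) a c) :
    ∃ d, Relation.ReflTransGen (@RStep C _) b d ∧ Relation.ReflTransGen (@RStep C _) c d := by
  refine ⟨nf a, ?_, ?_⟩
  · rw [rtg_nf_eq hab]; exact rtg_nf b
  · rw [rtg_nf_eq hac]; exact rtg_nf c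
lemma evals_unique {l : List (Gen C)} {x y : C} {f g' : x ⟶ y}
    (h1 : Evals l x y f) (h2 : Evals l x y g') : f = g' := by
  induction l generalizing x f g' with
  | nil =>
    obtain ⟨e, rfl⟩ := h1
    obtain ⟨e', rfl⟩ := h2
    rfl
  | cons g l ih =>
    obtain ⟨z, u, k, hg, he, rfl⟩ := h1
    obtain ⟨z', u', k', hg', he', rfl⟩ := h2
    obtain ⟨-, e2, hu⟩ := gensplit (hg.symm.trans hg')
    subst e2
    rw [eq_of_heq hu, ih he he']

lemma evals_append {l₁ l₂ : List (Gen C)} {x y : C} {f : x ⟶ y} :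
    Evals (l₁ ++ l₂) x y f ↔
      ∃ (z : C) (p : x ⟶ z) (q : z ⟶ y), Evals l₁ x z p ∧ Evals l₂ z y q ∧ f = p ≫ q := by
  induction l₁ generalizing x f with
  | nil =>
    constructor
    · intro h
      exact ⟨x, 𝟙 x, f, ⟨rfl, by simp⟩, h, by simp⟩
    · rintro ⟨z, p, q, ⟨e, rfl⟩, hq, rfl⟩
      subst e
      simpa using hq
  | cons g l₁ ih =>
    constructor
    · rintro ⟨z, u, k, rfl, he, rfl⟩
      obtain ⟨w, p, q, h1, h2, rfl⟩ := ih.mp he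
      exact ⟨w, u ≫ p, q, ⟨z, u, p, rfl, h1, rfl⟩, h2, by simp⟩
    · rintro ⟨w, p, q, ⟨z, u, k, hg, h1, rfl⟩, h2, rfl⟩
      exact ⟨z, u, k ≫ q, hg, ih.mpr ⟨w, k, q, h1, h2, rfl⟩, by simp⟩

lemma evals_single {a b x' y' : C} (w : a ⟶ b) {f : x' ⟶ y'} :
    Evals [(⟨a,b,w⟩ : Gen C)] x' y' f ↔
      ∃ (h1 : x' = a) (h2 : b = y'), f = eqToHom h1 ≫ w ≫ eqToHom h2 := by
  constructor
  · rintro ⟨z, u, k, hg, ⟨h, rfl⟩, rfl⟩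
    subst h
    obtain ⟨e1, e2, hu⟩ := gensplit hg
    subst e1
    subst e2
    rw [eq_of_heq hu]
    exact ⟨rfl, rfl, by simp⟩
  · rintro ⟨h1, h2, rfl⟩
    subst h1
    subst h2
    exact ⟨b, w, 𝟙 b, rfl, ⟨rfl, by simp⟩, by simp⟩

lemma evals_pair {x y z x' y' : C} (u : x ⟶ y) (v : y ⟶ z) {f : x' ⟶ y'} :
    Evals [(⟨x,y,u⟩ : Gen C), ⟨y,z,v⟩] x' y' f ↔
      ∃ (h1 : x' = x) (h2 : z = y'), f = eqToHom h1 ≫ (u ≫ v) ≫ eqToHom h2 := by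
  refine (evals_append (l₁ := [(⟨x,y,u⟩ : Gen C)]) (l₂ := [(⟨y,z,v⟩ : Gen C)])).trans ?_
  constructor
  · rintro ⟨w, p, q, hp, hq, rfl⟩
    obtain ⟨h1, h2, rfl⟩ := (evals_single u).mp hp
    obtain ⟨h3, h4, rfl⟩ := (evals_single v).mp hq
    subst h1
    subst h2
    exact ⟨rfl, h4, by simp⟩
  · rintro ⟨h1, h2, rfl⟩
    subst h1
    subst h2
    exact ⟨y, u, v, (evals_single u).mpr ⟨rfl, rfl, by simp⟩,
      (evals_single v).mpr ⟨rfl, rfl, by simp⟩, by simp⟩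

lemma step_evals {a b : List (Gen C)} {x y : C} {f : x ⟶ y}
    (hs : RStep a b) (he : Evals a x y f) : Evals b x y f := by
  obtain ⟨pre, post, x1, y1, z1, u, v, hu, hv, ha, hb⟩ := hs
  subst ha
  rw [List.append_assoc] at he
  obtain ⟨w1, p, r, hpre, hrest, rfl⟩ := evals_append.mp he
  obtain ⟨w2, q1, q2, hmid, hpost, rfl⟩ := evals_append.mp hrest
  obtain ⟨h1, h2, rfl⟩ := (evals_pair u v).mp hmid
  rcases hb with ⟨hc, rfl⟩ | ⟨hc, rfl⟩
  · rw [List.append_assoc]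
    exact evals_append.mpr ⟨w1, p, _, hpre,
      evals_append.mpr ⟨w2, _, q2, (evals_single (u ≫ v)).mpr ⟨h1, h2, rfl⟩, hpost, rfl⟩, rfl⟩
  · obtain ⟨e, hid⟩ := notNonId_elim hc
    subst h1
    subst e
    subst h2
    rw [eq_of_heq hid]
    exact evals_append.mpr ⟨w1, p, q2, hpre, hpost, by simp⟩

lemma rtg_evals {a b : List (Gen C)} {x y : C} {f : x ⟶ y}
    (hs : Relation.ReflTransGen (@RStep C _) a b) (he : Evals a x y f) : Evals b x y f := by
  induction hs with
  | refl => exact he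
  | tail _ h ih => exact step_evals h ih

lemma norm_eval_char {l : List (Gen C)} (hn : NormW l) (ha : ∀ p ∈ l, NonId p)
    {x y : C} {f : x ⟶ y} (he : Evals l x y f) :
    l = if NonId (⟨x,y,f⟩ : Gen C) then [(⟨x,y,f⟩ : Gen C)] else [] := by
  match l with
  | [] =>
    obtain ⟨e, rfl⟩ := he
    subst e
    rw [if_neg]; rfl
    intro hN
    exact hN x (by simp; rfl)
  | [g] =>
    obtain ⟨z, u, k, rfl, ⟨h, rfl⟩, rfl⟩ := he
    subst h
    have : u ≫ eqToHom rfl = u := by simp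
    rw [this, if_pos (ha _ List.mem_cons_self)]; rfl
  | g :: h :: t =>
    exfalso
    obtain ⟨z, u, k, rfl, he2, rfl⟩ := he
    obtain ⟨z2, u2, k2, hh, he3, rfl⟩ := he2
    refine (List.isChain_cons_cons.mp hn).1 ⟨ha _ List.mem_cons_self,
      ha _ (List.mem_cons_of_mem _ List.mem_cons_self), ?_⟩
    rw [hh]

lemma rtg_eqv {a b : List (Gen C)} (h : Relation.ReflTransGen (@RStep C _) a b) :
    Relation.EqvGen (@RStep C _) a b := by
  induction h with
  | refl => exact .refl a
  | tail _ hs ih => exact .trans _ _ _ ih (.rel _ _ hs)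

end Aux

/-- The reduced standard presentation of a category `C` is locally confluent; its
critical branchings, the pairs `(μ_{u,v} w̄, ū μ_{v,w})` arising from words
`[ū, v̄, w̄]` for composable non-identity triples `(u,v,w)`, are all confluent; hence,
being also terminating, the presentation is convergent and presents `C`. -/
theorem reduced_standard_presentation_convergent_and_presents {C : Type*} [Category C] :
    -- confluence of the critical branchings on the words `[ū, v̄, w̄]`
    (∀ (x y z t : C) (u : x ⟶ y) (v : y ⟶ z) (w : z ⟶ t),
      NonId ⟨x, y, u⟩ → NonId ⟨y, z, v⟩ → NonId ⟨z, t, w⟩ →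
      ∀ a b : List (Gen C),
        RStep [⟨x, y, u⟩, ⟨y, z, v⟩, ⟨z, t, w⟩] a →
        RStep [⟨x, y, u⟩, ⟨y, z, v⟩, ⟨z, t, w⟩] b →
        ∃ c, Relation.ReflTransGen (@RStep C _) a c ∧
          Relation.ReflTransGen (@RStep C _) b c) ∧
    -- local confluence
    (∀ a b c : List (Gen C), RStep a b → RStep a c →
      ∃ d, Relation.ReflTransGen (@RStep C _) b d ∧
        Relation.ReflTransGen (@RStep C _) c d) ∧
    -- confluence
    (∀ a b c : List (Gen C),
      Relation.ReflTransGen (@RStep C _) a b → Relation.ReflTransGen (@RStep C _) a c →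
      ∃ d, Relation.ReflTransGen (@RStep C _) b d ∧
        Relation.ReflTransGen (@RStep C _) c d) ∧
    -- the presentation presents `C`: two words of non-identity generators evaluating
    -- to parallel morphisms are congruent iff these morphisms are equal
    (∀ (x y : C) (f g : x ⟶ y) (a b : List (Gen C)),
      (∀ h ∈ a, NonId h) → (∀ h ∈ b, NonId h) →
      Evals a x y f → Evals b x y g →
      (Relation.EqvGen (@RStep C _) a b ↔ f = g)) := by
  refine ⟨?_, ?_, confl, ?_⟩
  · intro x y z t u v w hu hv hw a b ha hb
    exact confl _ a b (.single ha) (.single hb)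
  · intro a b c hab hac
    exact confl a b c (.single hab) (.single hac)
  · intro x y f g a b hna hnb hea heb
    constructor
    · intro heqv
      have h1 : nf a = nf b := eqv_nf_eq heqv
      have hfa := rtg_evals (rtg_nf a) hea
      have hgb := rtg_evals (rtg_nf b) heb
      rw [← h1] at hgb
      exact evals_unique hfa hgb
    · intro hfg
      subst hfg
      have c1 := norm_eval_char (norm_nf a) (nonid_nf hna) (rtg_evals (rtg_nf a) hea)
      have c2 := norm_eval_char (norm_nf b) (nonid_nf hnb) (rtg_evals (rtg_nf b) heb)
      have hnfeq : nf a = nf b := c1.trans c2.symm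
      have hb2 := rtg_eqv (rtg_nf b)
      rw [← hnfeq] at hb2
      exact Relation.EqvGen.trans _ _ _ (rtg_eqv (rtg_nf a))
        (Relation.EqvGen.symm _ _ hb2)
end

section
/- Every convergent string rewriting system is Tietze-equivalent to a reduced convergent string rewriting system (with the same set of generators); moreover if the original system is finite, the reduced one can be chosen finite. Here 'reduced' means: for every rule u ⇒ v, the word v is irreducible for all rules, and u is irreducible for all rules other than u ⇒ v itself. -/
/-- A rewriting step of a string rewriting system `R`. -/
def Step {α : Type*} (R : Set (List α × List α)) (u v : List α) : Prop :=
  ∃ l r p, p ∈ R ∧ u = l ++ p.1 ++ r ∧ v = l ++ p.2 ++ r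

/-- A word is irreducible (a normal form) when no rule applies to it. -/
def IsNormalForm {α : Type*} (R : Set (List α × List α)) (u : List α) : Prop :=
  ∀ v, ¬ Step R u v

/-- A string rewriting system is reduced when, for every rule `u ⇒ v`, the target `v`
is irreducible for all rules and the source `u` is irreducible for all rules other
than `u ⇒ v` itself. -/
def Reduced {α : Type*} (R : Set (List α × List α)) : Prop :=
  ∀ p ∈ R, IsNormalForm R p.2 ∧ IsNormalForm (R \ {p}) p.1

section AuxSRS

variable {α : Type*} {R : Set (List α × List α)}

theorem Step.append_ctx {u v : List α} (h : Step R u v) (l r : List α) :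
    Step R (l ++ u ++ r) (l ++ v ++ r) := by
  obtain ⟨l', r', p, hp, hu, hv⟩ := h
  exact ⟨l ++ l', r' ++ r, p, hp, by simp [hu], by simp [hv]⟩

theorem rtg_append_ctx {u v : List α} (h : Relation.ReflTransGen (Step R) u v)
    (l r : List α) :
    Relation.ReflTransGen (Step R) (l ++ u ++ r) (l ++ v ++ r) :=
  Relation.ReflTransGen.lift (fun w => l ++ w ++ r) (fun _ _ (hab : Step R _ _) => hab.append_ctx l r) _ _ h

theorem tg_append_ctx {u v : List α} (h : Relation.TransGen (Step R) u v)
    (l r : List α) :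
    Relation.TransGen (Step R) (l ++ u ++ r) (l ++ v ++ r) :=
  Relation.TransGen.lift (fun w => l ++ w ++ r) (fun _ _ (hab : Step R _ _) => hab.append_ctx l r) _ _ h

theorem exists_nf (hterm : WellFounded (fun v u => Step R u v)) (w : List α) :
    ∃ n, Relation.ReflTransGen (Step R) w n ∧ IsNormalForm R n := by
  induction w using hterm.induction with
  | _ w ih =>
    by_cases h : IsNormalForm R w
    · exact ⟨w, .refl, h⟩
    · simp only [IsNormalForm, not_forall, not_not] at h
      obtain ⟨v, hv⟩ := h
      obtain ⟨n, hn, hnf⟩ := ih v hv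
      exact ⟨n, .head hv hn, hnf⟩

theorem nf_fix {a b : List α} (ha : IsNormalForm R a)
    (h : Relation.ReflTransGen (Step R) a b) : a = b := by
  rcases Relation.ReflTransGen.cases_head h with rfl | ⟨c, hc, _⟩
  · rfl
  · exact absurd hc (ha c)

theorem rtg_eqvGen {r : List α → List α → Prop} {a b : List α}
    (h : Relation.ReflTransGen r a b) : Relation.EqvGen r a b := by
  induction h with
  | refl => exact .refl a
  | tail _ hbc ih => exact .trans _ _ _ ih (.rel _ _ hbc)

end AuxSRS

/-- Every convergent string rewriting system is Tietze-equivalent (generates the same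
congruence on words over the same generators) to a reduced convergent string rewriting
system; moreover, if the original system is finite, the reduced one can be chosen
finite. -/
theorem reduced_convergent_of_convergent {α : Type*} (R : Set (List α × List α))
    (hterm : WellFounded (fun v u => Step R u v))
    (hconf : ∀ w a b, Relation.ReflTransGen (Step R) w a →
      Relation.ReflTransGen (Step R) w b →
      ∃ c, Relation.ReflTransGen (Step R) a c ∧ Relation.ReflTransGen (Step R) b c) :
    ∃ R' : Set (List α × List α),
      Reduced R' ∧
      WellFounded (fun v u => Step R' u v) ∧
      (∀ w a b, Relation.ReflTransGen (Step R') w a →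
        Relation.ReflTransGen (Step R') w b →
        ∃ c, Relation.ReflTransGen (Step R') a c ∧
          Relation.ReflTransGen (Step R') b c) ∧
      (∀ u v, Relation.EqvGen (Step R) u v ↔ Relation.EqvGen (Step R') u v) ∧
      (R.Finite → R'.Finite) := by
  classical
  -- the normal form function
  set nf : List α → List α := fun w => (exists_nf hterm w).choose with hnfdef
  have hnf1 : ∀ w, Relation.ReflTransGen (Step R) w (nf w) :=
    fun w => (exists_nf hterm w).choose_spec.1
  have hnf2 : ∀ w, IsNormalForm R (nf w) :=
    fun w => (exists_nf hterm w).choose_spec.2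
  -- uniqueness of normal forms
  have huniq : ∀ w a b, Relation.ReflTransGen (Step R) w a →
      Relation.ReflTransGen (Step R) w b → IsNormalForm R a → IsNormalForm R b →
      a = b := by
    intro w a b hwa hwb hna hnb
    obtain ⟨c, hac, hbc⟩ := hconf w a b hwa hwb
    rw [nf_fix hna hac, nf_fix hnb hbc]
  have hnf_eq : ∀ a b, Relation.ReflTransGen (Step R) a b → nf a = nf b := by
    intro a b hab
    exact huniq a (nf a) (nf b) (hnf1 a) (hab.trans (hnf1 b)) (hnf2 a) (hnf2 b)
  -- the reduced system
  set R' : Set (List α × List α) :=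
    {p | (∃ v, (p.1, v) ∈ R) ∧ p.2 = nf p.1 ∧
      ∀ u' v', (u', v') ∈ R → u' ≠ p.1 → ¬ u' <:+: p.1} with hR'def
  -- each source of a rule in R reduces (in R) to its normal form with at least one step
  have hsrc : ∀ u v, (u, v) ∈ R → Relation.TransGen (Step R) u (nf u) := by
    intro u v huv
    have h1 : Step R u v := ⟨[], [], (u, v), huv, by simp, by simp⟩
    have h2 : nf v = nf u := (hnf_eq u v (Relation.ReflTransGen.single h1)).symm
    exact Relation.TransGen.head' h1 (h2 ▸ hnf1 v)
  -- every R'-step is a nonempty sequence of R-steps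
  have hsub : ∀ a b, Step R' a b → Relation.TransGen (Step R) a b := by
    intro a b hab
    obtain ⟨l, r, p, ⟨⟨v, hv⟩, hp2, -⟩, ha, hb⟩ := hab
    subst ha; subst hb; rw [hp2]
    exact tg_append_ctx (hsrc p.1 v hv) l r
  have hsub' : ∀ a b, Relation.ReflTransGen (Step R') a b →
      Relation.ReflTransGen (Step R) a b := by
    intro a b hab
    induction hab with
    | refl => exact .refl
    | tail _ hbc ih => exact ih.trans (hsub _ _ hbc).to_reflTransGen
  -- every word R'-reduces to its R-normal form
  have hreach : ∀ w, Relation.ReflTransGen (Step R') w (nf w) := by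
    have hwf := hterm.transGen
    intro w
    induction w using hwf.induction with
    | _ w ih =>
      by_cases h : IsNormalForm R w
      · rw [← nf_fix h (hnf1 w)]
      · simp only [IsNormalForm, not_forall, not_not] at h
        obtain ⟨x, l0, r0, p0, hp0, hw0, -⟩ := h
        -- the set of lengths of sources of rules that are factors of w
        have hT : ∃ n, ∃ u v, (u, v) ∈ R ∧ u <:+: w ∧ u.length = n :=
          ⟨p0.1.length, p0.1, p0.2, hp0, ⟨l0, r0, hw0.symm⟩, rfl⟩
        obtain ⟨u, v, huv, hinf, hlen⟩ := Nat.find_spec hT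
        have hmin : ∀ u' v', (u', v') ∈ R → u' <:+: w →
            u.length ≤ u'.length := by
          intro u' v' hu'v' hinf'
          rw [hlen]
          exact Nat.find_min' hT ⟨u', v', hu'v', hinf', rfl⟩
        have hmem : (u, nf u) ∈ R' := by
          refine ⟨⟨v, huv⟩, rfl, ?_⟩
          intro u' v' hu'v' hne hinf'
          exact hne (hinf'.sublist.eq_of_length
            (le_antisymm hinf'.sublist.length_le
              (hmin u' v' hu'v' (hinf'.trans hinf))))
        obtain ⟨l, r, hw⟩ := hinf
        set w' := l ++ nf u ++ r with hw'def
        have hstep' : Step R' w w' := ⟨l, r, (u, nf u), hmem, hw.symm, rfl⟩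
        have hwtg : Relation.TransGen (Step R) w w' := by
          rw [← hw]; exact tg_append_ctx (hsrc u v huv) l r
        have hrec : Relation.ReflTransGen (Step R') w' (nf w') :=
          ih w' ((Relation.transGen_swap).mpr hwtg)
        have : nf w' = nf w := (hnf_eq w w' hwtg.to_reflTransGen).symm
        exact Relation.ReflTransGen.head hstep' (this ▸ hrec)
  have hnf_eq' : ∀ a b, Relation.ReflTransGen (Step R') a b → nf a = nf b :=
    fun a b hab => hnf_eq a b (hsub' a b hab)
  refine ⟨R', ?_, ?_, ?_, ?_, ?_⟩
  · -- reduced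
    intro p hp
    obtain ⟨⟨v, hv⟩, hp2, hmin⟩ := hp
    constructor
    · intro x hx
      obtain ⟨l, r, q, ⟨⟨vq, hvq⟩, -, -⟩, hq1, hq2⟩ := hx
      exact hnf2 p.1 (l ++ vq ++ r) ⟨l, r, (q.1, vq), hvq, hp2 ▸ hq1, rfl⟩
    · intro x hx
      obtain ⟨l, r, q, ⟨hqR', hqp⟩, hq1, hq2⟩ := hx
      obtain ⟨⟨vq, hvq⟩, hq2', -⟩ := hqR'
      have hinf : q.1 <:+: p.1 := ⟨l, r, hq1.symm⟩
      have heq : q.1 = p.1 := by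
        by_contra hne
        exact hmin q.1 vq hvq hne hinf
      exact hqp (by
        simp only [Set.mem_singleton_iff]
        exact Prod.ext heq (by rw [hq2', heq, hp2]))
  · -- terminating
    exact Subrelation.wf
      (fun {a b} h => (Relation.transGen_swap).mpr (hsub b a h)) hterm.transGen
  · -- confluent
    intro w a b hwa hwb
    refine ⟨nf w, ?_, ?_⟩
    · rw [hnf_eq' w a hwa]; exact hreach a
    · rw [hnf_eq' w b hwb]; exact hreach b
  · -- Tietze equivalence
    intro u v
    constructor
    · intro h
      induction h with
      | rel a b hab =>
        have : nf a = nf b := hnf_eq a b (Relation.ReflTransGen.single hab)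
        exact Relation.EqvGen.trans _ _ _ (rtg_eqvGen (hreach a))
          (this ▸ (rtg_eqvGen (hreach b)).symm _ _)
      | refl a => exact .refl a
      | symm a b _ ih => exact ih.symm a b
      | trans a b c _ _ ih1 ih2 => exact ih1.trans a b c ih2
    · intro h
      induction h with
      | rel a b hab => exact rtg_eqvGen (hsub a b hab).to_reflTransGen
      | refl a => exact .refl a
      | symm a b _ ih => exact ih.symm a b
      | trans a b c _ _ ih1 ih2 => exact ih1.trans a b c ih2
  · -- finiteness
    intro hfin
    refine ((hfin.image (fun p => (p.1, nf p.1))).subset ?_)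
    rintro p ⟨⟨v, hv⟩, hp2, -⟩
    exact ⟨(p.1, v), hv, by simp [← hp2]⟩
end

section
/- In a reduced string rewriting system, the rewriting steps with a given source word u are totally ordered by the position of the rewritten factor: if two rewriting steps v·φ·v' and w·ψ·w' (with φ, ψ rules and v, v', w, w' words) have the same source u and the prefix v has the same length as the prefix w, then the two steps are equal. -/
/-- In a reduced string rewriting system, rewriting steps with the same source word are
totally ordered by the position of the rewritten factor: if two rewriting steps
`v·φ·v'` and `w·ψ·w'` have the same source and the prefixes `v` and `w` have the same
length, then the two steps are equal (`v = w`, `φ = ψ`, `v' = w'`). -/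
theorem reduced_steps_antisymm {α : Type*} (R : Set (List α × List α))
    (hred : Reduced R) (φ ψ : List α × List α) (hφ : φ ∈ R) (hψ : ψ ∈ R)
    (v v' w w' : List α)
    (hsrc : v ++ φ.1 ++ v' = w ++ ψ.1 ++ w')
    (hlen : v.length = w.length) :
    v = w ∧ φ = ψ ∧ v' = w' := by
  have hvw : v = w := by
    have h1 : (v ++ (φ.1 ++ v')).take v.length = v := List.take_left ..
    have h2 : (w ++ (ψ.1 ++ w')).take w.length = w := List.take_left ..
    rw [← h1, ← h2, ← List.append_assoc, ← List.append_assoc, hsrc, hlen]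
  subst hvw
  have h : φ.1 ++ v' = ψ.1 ++ w' := by
    have := hsrc
    rw [List.append_assoc, List.append_assoc] at this
    exact List.append_cancel_left this
  have hφψ : φ = ψ := by
    by_contra hne
    rcases List.append_eq_append_iff.mp h with ⟨t, ht, _⟩ | ⟨t, ht, _⟩
    · exact (hred ψ hψ).2 (φ.2 ++ t) ⟨[], t, φ, ⟨hφ, hne⟩, by simp [ht], rfl⟩
    · exact (hred φ hφ).2 (ψ.2 ++ t) ⟨[], t, ψ, ⟨hψ, fun e => hne e.symm⟩, by simp [ht], rfl⟩
  subst hφψ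
  exact ⟨rfl, rfl, List.append_cancel_left h⟩
end

section
/- Let M be a monoid presented by generators Σ₁ and relations Σ₂, and let [·] be the unique Fox derivation from the free monoid Σ₁* to the free (Z M)-bimodule-like module satisfying [1] = 0 and [uv] = [u]·v̄ + ū·[v] (where ū denotes the image of u in M) extending x ↦ [x] on generators. Then for any two words u, v of Σ₁* representing the same element of M, the element [u] − [v] lies in the submodule generated by the elements {[s(α)] − [t(α)] : α ∈ Σ₂} under the natural (two-sided) action of M. -/
/-- The image in the monoid `M` of a word over the generators, `π` being induced by
the map `f` on generators. -/
def pim {α M : Type*} [Monoid M] (f : α → M) (u : List α) : M := (u.map f).prod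

/-- Left action of `m ∈ M` on the free module `Z M [Σ₁]` over the basis
`M × Σ₁ × M` (two-sided translates of generators). -/
noncomputable def actL {α M : Type*} [Monoid M] (m : M) :
    ((M × α × M) →₀ ℤ) → ((M × α × M) →₀ ℤ) :=
  Finsupp.mapDomain fun q => (m * q.1, q.2.1, q.2.2)

/-- Right action of `m ∈ M` on the free module `Z M [Σ₁]`. -/
noncomputable def actR {α M : Type*} [Monoid M] (m : M) :
    ((M × α × M) →₀ ℤ) → ((M × α × M) →₀ ℤ) :=
  Finsupp.mapDomain fun q => (q.1, q.2.1, q.2.2 * m)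

/-- The Fox derivation `[·] : Σ₁* → Z M [Σ₁]`, the unique derivation with `[1] = 0`,
`[uv] = [u]·v̄ + ū·[v]`, sending each generator `x` to the basis element `(1, x, 1)`. -/
noncomputable def fox {α M : Type*} [Monoid M] (f : α → M) :
    List α → ((M × α × M) →₀ ℤ)
  | [] => 0
  | x :: u => Finsupp.single (1, x, pim f u) 1 + actL (f x) (fox f u)


section Aux
variable {α M : Type*} [Monoid M]

lemma pim_append (f : α → M) (u v : List α) :
    pim f (u ++ v) = pim f u * pim f v := by
  simp [pim]

lemma actL_add (m : M) (x y : (M × α × M) →₀ ℤ) :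
    actL m (x + y) = actL m x + actL m y := Finsupp.mapDomain_add

lemma actR_add (m : M) (x y : (M × α × M) →₀ ℤ) :
    actR m (x + y) = actR m x + actR m y := Finsupp.mapDomain_add

lemma actL_sub (m : M) (x y : (M × α × M) →₀ ℤ) :
    actL m (x - y) = actL m x - actL m y :=
  map_sub (Finsupp.mapDomain.addMonoidHom _) x y

lemma actR_sub (m : M) (x y : (M × α × M) →₀ ℤ) :
    actR m (x - y) = actR m x - actR m y :=
  map_sub (Finsupp.mapDomain.addMonoidHom _) x y

lemma actL_zero (m : M) : actL m (0 : (M × α × M) →₀ ℤ) = 0 := Finsupp.mapDomain_zero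

lemma actR_zero (m : M) : actR m (0 : (M × α × M) →₀ ℤ) = 0 := Finsupp.mapDomain_zero

lemma actL_one (x : (M × α × M) →₀ ℤ) : actL (1 : M) x = x := by
  simp only [actL, one_mul]
  exact Finsupp.mapDomain_id

lemma actL_mul (a b : M) (x : (M × α × M) →₀ ℤ) :
    actL (a * b) x = actL a (actL b x) := by
  simp only [actL]
  rw [← Finsupp.mapDomain_comp]
  congr 1
  funext q
  simp [Function.comp, mul_assoc]

lemma actL_actR (a b : M) (x : (M × α × M) →₀ ℤ) :
    actL a (actR b x) = actR b (actL a x) := by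
  simp only [actL, actR]
  rw [← Finsupp.mapDomain_comp, ← Finsupp.mapDomain_comp]
  rfl

lemma actR_single (m : M) (a : M) (b : α) (c : M) :
    actR m (Finsupp.single (a, b, c) (1 : ℤ)) = Finsupp.single (a, b, c * m) 1 :=
  Finsupp.mapDomain_single

lemma fox_append (f : α → M) (u v : List α) :
    fox f (u ++ v) = actR (pim f v) (fox f u) + actL (pim f u) (fox f v) := by
  induction u with
  | nil => simp [fox, pim, actR_zero, actL_one]
  | cons x u ih =>
      have : pim f (x :: u) = f x * pim f u := by simp [pim]
      rw [List.cons_append, fox, fox, ih, actL_add, actR_add, actR_single,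
        pim_append, this, actL_mul, actL_actR]
      abel

end Aux

/-- Let `M` be the monoid presented by generators `Σ₁ = α` and relations `Σ₂ = R`
(via a map `f` on generators whose induced projection `π` identifies two words exactly
when they are congruent). For any two words `u`, `v` representing the same element of
`M`, the element `[u] − [v]` lies in the submodule generated by the two-sided
`M`-translates of the elements `[s(ρ)] − [t(ρ)]`, for `ρ` ranging over the relations. -/
theorem fox_kernel_generated_by_relations {α M : Type*} [Monoid M]
    (R : Set (List α × List α)) (f : α → M)
    (hpres : ∀ u v : List α, pim f u = pim f v ↔ Relation.EqvGen (Step R) u v)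
    (u v : List α) (h : pim f u = pim f v) :
    fox f u - fox f v ∈ Submodule.span ℤ
      {x : (M × α × M) →₀ ℤ | ∃ (a b : M) (p : List α × List α), p ∈ R ∧
        x = actL a (actR b (fox f p.1 - fox f p.2))} := by
  have key : ∀ a b : List α, Step R a b →
      fox f a - fox f b ∈ Submodule.span ℤ
        {x : (M × α × M) →₀ ℤ | ∃ (a b : M) (p : List α × List α), p ∈ R ∧
          x = actL a (actR b (fox f p.1 - fox f p.2))} := by
    rintro a b ⟨l, r, p, hp, rfl, rfl⟩
    have hpim : pim f p.1 = pim f p.2 := by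
      rw [hpres]
      exact Relation.EqvGen.rel _ _ ⟨[], [], p, hp, by simp, by simp⟩
    apply Submodule.subset_span
    refine ⟨pim f l, pim f r, p, hp, ?_⟩
    rw [fox_append, fox_append, fox_append, fox_append, pim_append, pim_append,
      hpim, actR_sub, actL_sub, actR_add, actR_add, actL_actR, actL_actR]
    abel
  have he := (hpres u v).mp h
  clear h
  induction he with
  | rel a b hab => exact key a b hab
  | refl a => simp
  | symm a b _ ih => simpa using Submodule.neg_mem _ ih
  | trans a b c _ _ ih1 ih2 =>
      have := Submodule.add_mem _ ih1 ih2
      simpa using this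
end

section
/- For the rewriting system on Epi with rules s_i s_j ⇒ s_{j+1} s_i for i ≤ j, every critical branching arises from a word s_i s_j s_k with i ≤ j ≤ k, and each such branching is confluent: both s_{j+1} s_i s_k and s_i s_{k+1} s_j rewrite to the common normal form s_{k+2} s_{j+1} s_i. Hence the system is convergent. -/
/-- A rewriting step of the presentation of `Epi`: replace a factor `s_i s_j` with
`i ≤ j` by `s_{j+1} s_i`. -/
def EStep (u v : List ℕ) : Prop :=
  ∃ (l r : List ℕ) (i j : ℕ), i ≤ j ∧
    u = l ++ [i, j] ++ r ∧ v = l ++ [j + 1, i] ++ r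

namespace EpiAux

/-- Insert a letter at the left of a word, pushing it rightwards through larger-or-equal
letters using the rule `s_i s_j ⇒ s_{j+1} s_i`. -/
def eins (a : ℕ) : List ℕ → List ℕ
  | [] => [a]
  | y :: w => if a ≤ y then (y + 1) :: eins a w else a :: y :: w

/-- Normal form function. -/
def ephi : List ℕ → List ℕ
  | [] => []
  | a :: l => eins a (ephi l)

lemma eins_swap (i j : ℕ) (h : i ≤ j) : ∀ m : List ℕ,
    eins i (eins j m) = eins (j + 1) (eins i m) := by
  intro m
  induction m with
  | nil =>
      simp only [eins, if_pos h, if_neg (show ¬ j + 1 ≤ i by omega)]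
  | cons y m ih =>
      by_cases hjy : j ≤ y
      · have hiy : i ≤ y := le_trans h hjy
        simp only [eins, if_pos hjy, if_pos (show i ≤ y + 1 by omega), if_pos hiy,
          if_pos (show j + 1 ≤ y + 1 by omega)]
        rw [ih]
      · by_cases hiy : i ≤ y
        · simp only [eins, if_neg hjy, if_pos h, if_pos hiy,
            if_neg (show ¬ j + 1 ≤ y + 1 by omega)]
        · simp only [eins, if_neg hjy, if_pos h, if_neg hiy,
            if_neg (show ¬ j + 1 ≤ i by omega)]

lemma ephi_append (l m : List ℕ) : ephi (l ++ m) = l.foldr eins (ephi m) := by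
  induction l with
  | nil => simp [ephi]
  | cons a l ih => simp [ephi, ih]

lemma ephi_step {u v : List ℕ} (h : EStep u v) : ephi u = ephi v := by
  obtain ⟨l, r, i, j, hij, hu, hv⟩ := h
  subst hu; subst hv
  have e1 : ephi (l ++ [i, j] ++ r) = l.foldr eins (ephi ([i, j] ++ r)) := by
    rw [List.append_assoc]; exact ephi_append l _
  have e2 : ephi (l ++ [j + 1, i] ++ r) = l.foldr eins (ephi ([j + 1, i] ++ r)) := by
    rw [List.append_assoc]; exact ephi_append l _
  rw [e1, e2]
  congr 1
  simp only [ephi, List.cons_append, List.nil_append]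
  exact eins_swap i j hij (ephi r)

lemma ephi_rtg {u v : List ℕ} (h : Relation.ReflTransGen EStep u v) :
    ephi u = ephi v := by
  induction h with
  | refl => rfl
  | tail _ h ih => exact ih.trans (ephi_step h)

lemma estep_cons {u v : List ℕ} (x : ℕ) (h : EStep u v) : EStep (x :: u) (x :: v) := by
  obtain ⟨l, r, i, j, hij, hu, hv⟩ := h
  exact ⟨x :: l, r, i, j, hij, by simp [hu], by simp [hv]⟩

lemma rtg_cons {u v : List ℕ} (x : ℕ) (h : Relation.ReflTransGen EStep u v) :
    Relation.ReflTransGen EStep (x :: u) (x :: v) := by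
  induction h with
  | refl => exact Relation.ReflTransGen.refl
  | tail _ h ih => exact ih.tail (estep_cons x h)

lemma to_eins (a : ℕ) : ∀ v : List ℕ, Relation.ReflTransGen EStep (a :: v) (eins a v) := by
  intro v
  induction v with
  | nil => exact Relation.ReflTransGen.refl
  | cons y w ih =>
      by_cases hay : a ≤ y
      · have step : EStep (a :: y :: w) ((y + 1) :: a :: w) :=
          ⟨[], w, a, y, hay, rfl, rfl⟩
        simp only [eins, if_pos hay]
        exact (Relation.ReflTransGen.single step).trans (rtg_cons (y + 1) ih)
      · simp only [eins, if_neg hay]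
        exact Relation.ReflTransGen.refl

lemma to_ephi (w : List ℕ) : Relation.ReflTransGen EStep w (ephi w) := by
  induction w with
  | nil => exact Relation.ReflTransGen.refl
  | cons a l ih => exact (rtg_cons a ih).trans (to_eins a (ephi l))

/-- Invariant bound: `max_p (u_p + p + 1)` (0 on the empty word). -/
def bnd : List ℕ → ℕ
  | [] => 0
  | a :: l => max (a + 1) (bnd l + 1)

lemma bnd_mem {a : ℕ} : ∀ {m : List ℕ}, a ∈ m → a + 1 ≤ bnd m := by
  intro m
  induction m with
  | nil => intro h; simp at h
  | cons y l ih =>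
      intro h
      rcases List.mem_cons.1 h with h | h
      · subst h; simp [bnd]
      · have := ih h; simp [bnd]; omega

lemma bnd_step {u v : List ℕ} (h : EStep u v) : bnd u = bnd v := by
  obtain ⟨l, r, i, j, hij, hu, hv⟩ := h
  subst hu; subst hv
  induction l with
  | nil => simp [bnd]; omega
  | cons x l ih =>
      show max (x + 1) (bnd (l ++ [i, j] ++ r) + 1)
        = max (x + 1) (bnd (l ++ [j + 1, i] ++ r) + 1)
      rw [ih]

/-- Base-`(b+1)` value of a word with digits `b - a`. -/
def valb (b : ℕ) (l : List ℕ) : ℕ :=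
  l.foldl (fun acc a => acc * (b + 1) + (b - a)) 0

lemma foldl_shift (b : ℕ) : ∀ (l : List ℕ) (acc : ℕ),
    l.foldl (fun acc a => acc * (b + 1) + (b - a)) acc
      = acc * (b + 1) ^ l.length + valb b l := by
  intro l
  induction l with
  | nil => intro acc; simp [valb]
  | cons a l ih =>
      intro acc
      simp only [List.foldl_cons, List.length_cons, valb] at *
      rw [ih (acc * (b + 1) + (b - a)), ih (0 * (b + 1) + (b - a))]
      ring

lemma valb_step {u v : List ℕ} (h : EStep u v) : valb (bnd u) v < valb (bnd u) u := by
  obtain ⟨l, r, i, j, hij, hu, hv⟩ := h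
  have hjmem : j ∈ u := by subst hu; simp
  have hjb : j + 1 ≤ bnd u := bnd_mem hjmem
  set b := bnd u with hb
  subst hu; subst hv
  simp only [valb, List.foldl_append, List.foldl_cons, List.foldl_nil]
  set A := List.foldl (fun acc a => acc * (b + 1) + (b - a)) 0 l with hA
  rw [foldl_shift, foldl_shift]
  set X := (b + 1) ^ r.length with hX
  have hX1 : 1 ≤ X := Nat.one_le_pow _ _ (by omega)
  have h1 : A * (b + 1) + (b - (j + 1)) + 1 ≤ A * (b + 1) + (b - i) := by
    have : b - (j + 1) + 1 ≤ b - i := by omega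
    linarith
  have h2 := Nat.mul_le_mul_right (b + 1) h1
  have h3 : (A * (b + 1) + (b - (j + 1)) + 1) * (b + 1)
      = (A * (b + 1) + (b - (j + 1))) * (b + 1) + (b + 1) := by ring
  have hbi : b - i ≤ b := by omega
  have key : (A * (b + 1) + (b - (j + 1))) * (b + 1) + (b - i) + 1
      ≤ (A * (b + 1) + (b - i)) * (b + 1) + (b - j) := by linarith
  set QQ := (A * (b + 1) + (b - (j + 1))) * (b + 1) + (b - i) with hQQ
  set PP := (A * (b + 1) + (b - i)) * (b + 1) + (b - j) with hPP
  have h4 : (QQ + 1) * X ≤ PP * X := Nat.mul_le_mul_right _ key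
  have h5 : (QQ + 1) * X = QQ * X + X := by ring
  linarith

/-- The termination measure. -/
def mu (u : List ℕ) : ℕ := valb (bnd u) u

lemma mu_step {u v : List ℕ} (h : EStep u v) : mu v < mu u := by
  have hb := bnd_step h
  unfold mu
  rw [← hb]
  exact valb_step h

end EpiAux

open EpiAux in
/-- For the rewriting system on `Epi` with rules `s_i s_j ⇒ s_{j+1} s_i` (`i ≤ j`),
every critical branching — a minimal overlapping pair of steps, given by rules with
sources `[i, j]` (`i ≤ j`, empty left context) and `[i', j']` (`i' ≤ j'`, empty right
context) overlapping on a common word — arises from a word `s_i s_j s_k` with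
`i ≤ j ≤ k`; each such branching is confluent: both reducts `s_{j+1} s_i s_k` and
`s_i s_{k+1} s_j` rewrite to the common normal form `s_{k+2} s_{j+1} s_i`. Hence the
system, being terminating, is convergent (confluent). -/
theorem Epi_presentation_convergent :
    -- critical branchings come from words [i, j, k] with i ≤ j ≤ k
    (∀ (i j i' j' : ℕ) (l r : List ℕ), i ≤ j → i' ≤ j' →
      ([i, j] : List ℕ) ++ r = l ++ [i', j'] →
      ¬ ((i, j) = (i', j') ∧ l = [] ∧ r = []) →
      l.length < 2 →
      l = [i] ∧ r = [j'] ∧ i' = j ∧ i ≤ j ∧ j ≤ j') ∧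
    -- each critical branching is confluent with common normal form s_{k+2} s_{j+1} s_i
    (∀ i j k : ℕ, i ≤ j → j ≤ k →
      Relation.ReflTransGen EStep [j + 1, i, k] [k + 2, j + 1, i] ∧
      Relation.ReflTransGen EStep [i, k + 1, j] [k + 2, j + 1, i]) ∧
    -- termination
    WellFounded (fun v u => EStep u v) ∧
    -- confluence
    (∀ w a b : List ℕ, Relation.ReflTransGen EStep w a →
      Relation.ReflTransGen EStep w b →
      ∃ c, Relation.ReflTransGen EStep a c ∧ Relation.ReflTransGen EStep b c) := by
  refine ⟨?_, ?_, ?_, ?_⟩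
  · -- shape of critical branchings
    intro i j i' j' l r hij hij' heq hne hlen
    match l with
    | [] =>
        exfalso
        simp only [List.nil_append, List.cons_append, List.nil_append] at heq
        have h1 : i = i' := by
          have := congrArg (fun t => t.headI) heq; simpa using this
        have h2 : j :: r = [j'] := by
          have := congrArg (fun t => t.tail) heq; simpa using this
        have h3 : j = j' ∧ r = [] := by
          cases h2; exact ⟨rfl, rfl⟩
        exact hne ⟨by simp [h1, h3.1], rfl, h3.2⟩
    | [x] =>
        simp only [List.cons_append, List.nil_append] at heq
        have h1 : i = x := (List.cons_eq_cons.1 heq).1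
        have h2 : j :: r = i' :: [j'] := (List.cons_eq_cons.1 heq).2
        have h3 : j = i' := (List.cons_eq_cons.1 h2).1
        have h4 : r = [j'] := (List.cons_eq_cons.1 h2).2
        exact ⟨by simp [h1], h4, h3.symm, hij, by omega⟩
    | x :: y :: l' => exact absurd hlen (by simp)
  · -- critical branchings are confluent
    intro i j k hij hjk
    constructor
    · have s1 : EStep [j + 1, i, k] [j + 1, k + 1, i] :=
        ⟨[j + 1], [], i, k, le_trans hij hjk, rfl, rfl⟩
      have s2 : EStep [j + 1, k + 1, i] [k + 2, j + 1, i] :=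
        ⟨[], [i], j + 1, k + 1, by omega, rfl, rfl⟩
      exact (Relation.ReflTransGen.single s1).tail s2
    · have s1 : EStep [i, k + 1, j] [k + 2, i, j] :=
        ⟨[], [j], i, k + 1, by omega, rfl, rfl⟩
      have s2 : EStep [k + 2, i, j] [k + 2, j + 1, i] :=
        ⟨[k + 2], [], i, j, hij, rfl, rfl⟩
      exact (Relation.ReflTransGen.single s1).tail s2
  · -- termination
    have hwf : WellFounded (InvImage Nat.lt mu) := InvImage.wf mu Nat.lt_wfRel.wf
    exact Subrelation.wf (fun {v u} h => mu_step h) hwf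
  · -- confluence
    intro w a b ha hb
    refine ⟨ephi a, to_ephi a, ?_⟩
    have : ephi b = ephi a := (ephi_rtg hb).symm.trans (ephi_rtg ha)
    exact this ▸ to_ephi b
end
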